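/- For n ≥ 3, the initial ideal of the join-meet ideal I of the diamond lattice D_{n+2} with respect to the reverse lexicographic order induced by x > y_1 > ⋯ > y_n > z is the monomial ideal in_<(I) = (y_i y_j : 1 ≤ i < j ≤ n) + (x y_k z : 1 ≤ k ≤ n−1) + (x y_n² z). -/

import Mathlib

open MvPolynomial

noncomputable def xP (K : Type*) [Field K] (n : ℕ) : MvPolynomial (Fin (n + 2)) K := X 0
noncomputable def zP (K : Type*) [Field K] (n : ℕ) : MvPolynomial (Fin (n + 2)) K :=
  X (Fin.last (n + 1))
noncomputable def yP (K : Type*) [Field K] (n : ℕ) (i : Fin n) : MvPolynomial (Fin (n + 2)) K :=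
  X i.succ.castSucc
noncomputable def diamondIdeal (K : Type*) [Field K] (n : ℕ) :
    Ideal (MvPolynomial (Fin (n + 2)) K) :=
  Ideal.span {f | ∃ i j : Fin n, i < j ∧ f = yP K n i * yP K n j - xP K n * zP K n}
def mdeg {σ : Type*} (m : σ →₀ ℕ) : ℕ := m.sum fun _ e => e
def revlexLt {N : ℕ} (a b : Fin N →₀ ℕ) : Prop :=
  mdeg a < mdeg b ∨ (mdeg a = mdeg b ∧ ∃ i, b i < a i ∧ ∀ j, i < j → a j = b j)
def IsLeadMon {N : ℕ} {K : Type*} [Field K] (f : MvPolynomial (Fin N) K) (m : Fin N →₀ ℕ) :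
    Prop :=
  m ∈ f.support ∧ ∀ m' ∈ f.support, m' ≠ m → revlexLt m' m
noncomputable def initialIdeal {N : ℕ} (K : Type*) [Field K]
    (I : Ideal (MvPolynomial (Fin N) K)) : Ideal (MvPolynomial (Fin N) K) :=
  Ideal.span {p | ∃ f ∈ I, ∃ m, IsLeadMon f m ∧ p = monomial m (1 : K)}

section Aux
open Finsupp

lemma mdeg_add {σ : Type*} (a b : σ →₀ ℕ) : mdeg (a + b) = mdeg a + mdeg b := by
  unfold mdeg
  exact Finsupp.sum_add_index' (fun _ => rfl) (fun _ _ _ => rfl)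

lemma mdeg_single {σ : Type*} (i : σ) (k : ℕ) : mdeg (Finsupp.single i k) = k := by
  unfold mdeg
  exact Finsupp.sum_single_index rfl

lemma mdeg_eq {N : ℕ} (m : Fin N →₀ ℕ) : mdeg m = ∑ i, m i := by
  unfold mdeg
  exact Finsupp.sum_fintype _ _ (fun _ => rfl)

lemma revlex_asymm {N : ℕ} {a b : Fin N →₀ ℕ} (h1 : revlexLt a b) (h2 : revlexLt b a) : False := by
  rcases h1 with h1 | ⟨e1, i, hi, hia⟩
  · rcases h2 with h2 | ⟨e2, _⟩ <;> omega
  · rcases h2 with h2 | ⟨e2, i', hi', hia'⟩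
    · omega
    · rcases lt_trichotomy i i' with h | h | h
      · have := hia i' h; omega
      · subst h; omega
      · have := hia' i h; omega

open Finsupp

variable {n : ℕ}

abbrev yIdx (i : Fin n) : Fin (n+2) := i.succ.castSucc
abbrev zI (n : ℕ) : Fin (n+2) := Fin.last (n+1)

lemma yIdx_val (i : Fin n) : (yIdx i : Fin (n+2)).val = i.val + 1 := rfl
lemma zI_val : (zI n).val = n + 1 := rfl
lemma yIdx_ne_zero (i : Fin n) : (yIdx i : Fin (n+2)) ≠ 0 := by
  simp [Fin.ext_iff]
lemma yIdx_ne_z (i : Fin n) : (yIdx i : Fin (n+2)) ≠ zI n := by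
  simp [Fin.ext_iff]; omega
lemma zero_ne_z : (0 : Fin (n+2)) ≠ zI n := by
  simp [Fin.ext_iff]
lemma yIdx_inj {i j : Fin n} (h : (yIdx i : Fin (n+2)) = yIdx j) : i = j := by
  simp [Fin.ext_iff] at h ⊢; omega

/-- total y-degree -/
def Bn (m : Fin (n+2) →₀ ℕ) : ℕ := ∑ i : Fin n, m (yIdx i)

lemma Bn_add (a b : Fin (n+2) →₀ ℕ) : Bn (a + b) = Bn a + Bn b := by
  unfold Bn
  simp [Finset.sum_add_distrib]

lemma Bn_single_y (i : Fin n) (k : ℕ) : Bn (single (yIdx i : Fin (n+2)) k) = k := by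
  unfold Bn
  rw [Finset.sum_eq_single i]
  · simp
  · intro j _ hj
    rw [single_apply, if_neg (fun h => hj (yIdx_inj h).symm)]
  · simp

lemma Bn_single_x (k : ℕ) : Bn (single (0 : Fin (n+2)) k) = 0 := by
  unfold Bn
  apply Finset.sum_eq_zero
  intro j _
  rw [single_apply, if_neg (fun h => yIdx_ne_zero j h.symm)]

lemma Bn_single_z (k : ℕ) : Bn (single (zI n) k) = 0 := by
  unfold Bn
  apply Finset.sum_eq_zero
  intro j _
  rw [single_apply, if_neg (fun h => yIdx_ne_z j h.symm)]

lemma mdeg_split (m : Fin (n+2) →₀ ℕ) : mdeg m = m 0 + Bn m + m (zI n) := by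
  rw [mdeg_eq, Fin.sum_univ_succ, Fin.sum_univ_castSucc]
  unfold Bn
  have h1 : ∀ i : Fin n, (i.castSucc).succ = (yIdx i : Fin (n+2)) := fun i => Fin.succ_castSucc i
  have h2 : ((Fin.last n).succ : Fin (n+2)) = zI n := rfl
  rw [h2, Finset.sum_congr rfl (fun i _ => by rw [h1] : ∀ i ∈ Finset.univ, m ((i : Fin n).castSucc.succ) = m (yIdx i))]
  ring
lemma ynF_lt (hn : 3 ≤ n) : n - 1 < n := by omega
def ynF (hn : 3 ≤ n) : Fin n := ⟨n-1, ynF_lt hn⟩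

def Red (m : Fin (n+2) →₀ ℕ) : Prop :=
  (∃ i j : Fin n, i ≠ j ∧ 1 ≤ m (yIdx i) ∧ 1 ≤ m (yIdx j)) ∨ (1 ≤ m 0 ∧ 1 ≤ m (zI n))

open Classical in
noncomputable def nfExp (hn : 3 ≤ n) (m : Fin (n+2) →₀ ℕ) : Fin (n+2) →₀ ℕ :=
  if Red m then
    single (0 : Fin (n+2)) (m 0 + Bn m / 2) + single (yIdx (ynF hn)) (Bn m % 2)
      + single (zI n) (m (zI n) + Bn m / 2)
  else m

lemma apply_zero_of_sum (u : Fin (n+2) →₀ ℕ) (i j : Fin n) :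
    ((u + single (yIdx i : Fin (n+2)) 1 + single (yIdx j : Fin (n+2)) 1 : Fin (n+2) →₀ ℕ)) 0 = u 0 := by
  simp [Finsupp.add_apply, Finsupp.single_apply_eq_zero, yIdx_ne_zero i, yIdx_ne_zero j,
    (yIdx_ne_zero i).symm, (yIdx_ne_zero j).symm]

lemma nf_gen (hn : 3 ≤ n) (u : Fin (n+2) →₀ ℕ) {i j : Fin n} (hij : i ≠ j) :
    nfExp hn (u + single (yIdx i : Fin (n+2)) 1 + single (yIdx j : Fin (n+2)) 1)
      = nfExp hn (u + single (0 : Fin (n+2)) 1 + single (zI n) 1) := by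
  set m1 := u + single (yIdx i : Fin (n+2)) 1 + single (yIdx j : Fin (n+2)) 1 with hm1
  set m2 := u + single (0 : Fin (n+2)) 1 + single (zI n) 1 with hm2
  have hyi : m1 (yIdx i) = u (yIdx i) + 1 := by
    have : (single (yIdx j : Fin (n+2)) 1) (yIdx i) = 0 := by
      rw [Finsupp.single_apply_eq_zero]; exact fun h => (hij (yIdx_inj h.symm).symm).elim
    rw [hm1, Finsupp.add_apply, Finsupp.add_apply, this, Finsupp.single_eq_same]
  have hyj : m1 (yIdx j) = u (yIdx j) + 1 := by
    have : (single (yIdx i : Fin (n+2)) 1) (yIdx j) = 0 := by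
      rw [Finsupp.single_apply_eq_zero]; exact fun h => (hij (yIdx_inj h.symm)).elim
    rw [hm1, Finsupp.add_apply, Finsupp.add_apply, this, Finsupp.single_eq_same, add_zero]
  have hr1 : Red m1 := Or.inl ⟨i, j, hij, by omega, by omega⟩
  have hr2 : Red m2 := Or.inr ⟨by simp [hm2, Finsupp.add_apply, (zero_ne_z (n := n)).symm],
    by simp [hm2, Finsupp.add_apply, zero_ne_z (n := n)]⟩
  have h10 : m1 0 = u 0 := apply_zero_of_sum u i j
  have h1z : m1 (zI n) = u (zI n) := by
    simp [hm1, Finsupp.add_apply, Finsupp.single_apply_eq_zero, (yIdx_ne_z i).symm,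
      (yIdx_ne_z j).symm, yIdx_ne_z i, yIdx_ne_z j]
  have h1B : Bn m1 = Bn u + 2 := by
    rw [hm1, Bn_add, Bn_add, Bn_single_y, Bn_single_y]
  have h20 : m2 0 = u 0 + 1 := by
    simp [hm2, Finsupp.add_apply, Finsupp.single_apply_eq_zero, zero_ne_z (n := n),
      (zero_ne_z (n := n)).symm]
  have h2z : m2 (zI n) = u (zI n) + 1 := by
    simp [hm2, Finsupp.add_apply, Finsupp.single_apply_eq_zero, zero_ne_z (n := n),
      (zero_ne_z (n := n)).symm]
  have h2B : Bn m2 = Bn u := by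
    rw [hm2, Bn_add, Bn_add, Bn_single_x, Bn_single_z]; ring
  rw [nfExp, nfExp, if_pos hr1, if_pos hr2, h10, h1z, h1B, h20, h2z, h2B]
  congr 1
  · congr 1
    · congr 1; omega
    · congr 1; omega
  · congr 1; omega
lemma fin_cases' (t : Fin (n+2)) : t = 0 ∨ t = zI n ∨ ∃ k : Fin n, t = yIdx k := by
  rcases t with ⟨v, hv⟩
  rcases Nat.eq_zero_or_pos v with h | h
  · left; simp [Fin.ext_iff, h]
  · rcases Nat.lt_or_ge v (n+1) with h2 | h2
    · right; right; exact ⟨⟨v - 1, by omega⟩, by simp [Fin.ext_iff]; omega⟩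
    · right; left; simp [Fin.ext_iff]; omega

lemma pair_le {a b : Fin (n+2)} (hab : a ≠ b) {m : Fin (n+2) →₀ ℕ} {k1 k2 : ℕ}
    (ha : k1 ≤ m a) (hb : k2 ≤ m b) : single a k1 + single b k2 ≤ m := by
  rw [Finsupp.le_def]
  intro t
  rw [Finsupp.add_apply, Finsupp.single_apply, Finsupp.single_apply]
  by_cases h1 : a = t <;> by_cases h2 : b = t <;> subst_eqs <;> simp_all
  all_goals omega

lemma triple_le {a b c : Fin (n+2)} (hab : a ≠ b) (hac : a ≠ c) (hbc : b ≠ c)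
    {m : Fin (n+2) →₀ ℕ} {k1 k2 k3 : ℕ}
    (ha : k1 ≤ m a) (hb : k2 ≤ m b) (hc : k3 ≤ m c) :
    single a k1 + single b k2 + single c k3 ≤ m := by
  rw [Finsupp.le_def]
  intro t
  rw [Finsupp.add_apply, Finsupp.add_apply, Finsupp.single_apply, Finsupp.single_apply,
    Finsupp.single_apply]
  by_cases h1 : a = t <;> by_cases h2 : b = t <;> by_cases h3 : c = t <;> subst_eqs <;>
    simp_all <;> omega

def Bad (hn : 3 ≤ n) (m : Fin (n+2) →₀ ℕ) : Prop :=
  (∃ i j : Fin n, i < j ∧ single (yIdx i : Fin (n+2)) 1 + single (yIdx j : Fin (n+2)) 1 ≤ m) ∨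
  (∃ k : Fin n, (k:ℕ) < n-1 ∧
    single (0 : Fin (n+2)) 1 + single (yIdx k : Fin (n+2)) 1 + single (zI n) 1 ≤ m) ∨
  (single (0 : Fin (n+2)) 1 + single (yIdx (ynF hn) : Fin (n+2)) 2 + single (zI n) 1 ≤ m)

lemma y_zero_of_not_bad (hn : 3 ≤ n) {m : Fin (n+2) →₀ ℕ} (hb : ¬ Bad hn m)
    (h0 : 1 ≤ m 0) (hz : 1 ≤ m (zI n)) :
    (∀ k : Fin n, k ≠ ynF hn → m (yIdx k) = 0) ∧ m (yIdx (ynF hn)) ≤ 1 := by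
  constructor
  · intro k hk
    by_contra hne
    apply hb
    right; left
    refine ⟨k, ?_, triple_le (yIdx_ne_zero k).symm (zero_ne_z) (yIdx_ne_z k) h0 (by omega) hz⟩
    have : (k : ℕ) ≠ n - 1 := fun h => hk (by simp [ynF, Fin.ext_iff, h])
    omega
  · by_contra hge
    apply hb
    right; right
    exact triple_le (yIdx_ne_zero _).symm (zero_ne_z) (yIdx_ne_z _) h0 (by omega) hz

lemma Bn_eq_single_val (hn : 3 ≤ n) {m : Fin (n+2) →₀ ℕ}
    (h : ∀ k : Fin n, k ≠ ynF hn → m (yIdx k) = 0) : Bn m = m (yIdx (ynF hn)) := by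
  unfold Bn
  rw [Finset.sum_eq_single (ynF hn)]
  · intro j _ hj; exact h j hj
  · simp

lemma nf_std (hn : 3 ≤ n) {m : Fin (n+2) →₀ ℕ} (hb : ¬ Bad hn m) : nfExp hn m = m := by
  rw [nfExp]
  split
  · rename_i hred
    rcases hred with ⟨i, j, hij, hi, hj⟩ | ⟨h0, hz⟩
    · exfalso
      apply hb
      left
      rcases lt_or_gt_of_ne hij with h | h
      · exact ⟨i, j, h, pair_le (fun he => hij (yIdx_inj he)) hi hj⟩
      · exact ⟨j, i, h, pair_le (fun he => hij (yIdx_inj he).symm) hj hi⟩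
    · obtain ⟨hy, hyn⟩ := y_zero_of_not_bad hn hb h0 hz
      have hB : Bn m = m (yIdx (ynF hn)) := Bn_eq_single_val hn hy
      have hB1 : Bn m ≤ 1 := by omega
      ext t
      rcases fin_cases' t with rfl | rfl | ⟨k, rfl⟩
      · rw [Finsupp.add_apply, Finsupp.add_apply, Finsupp.single_apply, Finsupp.single_apply,
          Finsupp.single_apply, if_pos rfl, if_neg (yIdx_ne_zero _), if_neg (zero_ne_z).symm]
        omega
      · rw [Finsupp.add_apply, Finsupp.add_apply, Finsupp.single_apply, Finsupp.single_apply,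
          Finsupp.single_apply, if_neg (zero_ne_z), if_neg (yIdx_ne_z _), if_pos rfl]
        omega
      · have h1 : (0 : Fin (n+2)) ≠ yIdx k := fun h => yIdx_ne_zero k h.symm
        have h2 : zI n ≠ (yIdx k : Fin (n+2)) := fun h => yIdx_ne_z k h.symm
        by_cases hk : k = ynF hn
        · subst hk
          simp only [Finsupp.add_apply, Finsupp.single_apply, if_neg h1, if_neg h2, if_pos rfl]
          simp
          simp at hB hyn
          omega
        · have h3 : (yIdx (ynF hn) : Fin (n+2)) ≠ yIdx k := fun h => hk (yIdx_inj h).symm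
          simp only [Finsupp.add_apply, Finsupp.single_apply, if_neg h1, if_neg h2, if_neg h3,
            hy k hk]
          simp
  · rfl
lemma y_le_Bn (m : Fin (n+2) →₀ ℕ) (k : Fin n) : m (yIdx k) ≤ Bn m :=
  Finset.single_le_sum (f := fun i => m (yIdx i)) (fun i _ => Nat.zero_le _) (Finset.mem_univ k)

lemma y_pair_le_Bn (m : Fin (n+2) →₀ ℕ) {k k' : Fin n} (h : k ≠ k') :
    m (yIdx k) + m (yIdx k') ≤ Bn m := by
  have := Finset.sum_le_sum_of_subset (Finset.subset_univ {k, k'})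
    (f := fun i => m (yIdx i))
  rwa [Finset.sum_pair h] at this

lemma nf_le (hn : 3 ≤ n) (m : Fin (n+2) →₀ ℕ) :
    revlexLt (nfExp hn m) m ∨ nfExp hn m = m := by
  rw [nfExp]
  split
  case isFalse => right; rfl
  case isTrue hred =>
  set B := Bn m with hB
  set nf := single (0:Fin (n+2)) (m 0 + B / 2) + single (yIdx (ynF hn) : Fin (n+2)) (B % 2)
    + single (zI n) (m (zI n) + B / 2) with hnf
  have nf_at : ∀ t, nf t = (if (0:Fin (n+2)) = t then m 0 + B/2 else 0)
      + (if (yIdx (ynF hn) : Fin (n+2)) = t then B % 2 else 0)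
      + (if zI n = t then m (zI n) + B/2 else 0) := by
    intro t
    rw [hnf]
    simp only [Finsupp.add_apply, Finsupp.single_apply]
  have nf0 : nf 0 = m 0 + B/2 := by
    rw [nf_at, if_pos rfl, if_neg (yIdx_ne_zero _), if_neg (zero_ne_z).symm]
    omega
  have nfz : nf (zI n) = m (zI n) + B/2 := by
    rw [nf_at, if_neg zero_ne_z, if_neg (yIdx_ne_z _), if_pos rfl]
    omega
  have nfy : ∀ k : Fin n, nf (yIdx k) = if k = ynF hn then B % 2 else 0 := by
    intro k
    have h1 : ¬((0:Fin (n+2)) = yIdx k) := fun h => yIdx_ne_zero k h.symm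
    have h2 : ¬(zI n = (yIdx k : Fin (n+2))) := fun h => yIdx_ne_z k h.symm
    rw [nf_at, if_neg h1, if_neg h2]
    by_cases hk : k = ynF hn
    · subst hk; rw [if_pos rfl, if_pos rfl]; omega
    · have h3 : ¬((yIdx (ynF hn) : Fin (n+2)) = yIdx k) := fun h => hk (yIdx_inj h).symm
      rw [if_neg h3, if_neg hk]
  have hdeg : mdeg nf = mdeg m := by
    rw [hnf, mdeg_add, mdeg_add, mdeg_single, mdeg_single, mdeg_single, mdeg_split m, ← hB]
    omega
  rcases Nat.lt_or_ge B 2 with h2 | h2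
  · by_cases hy1 : m (yIdx (ynF hn)) = B
    · -- nf = m
      right
      ext t
      rcases fin_cases' t with rfl | rfl | ⟨k, rfl⟩
      · rw [nf0]
        omega
      · rw [nfz]
        omega
      · rw [nfy]
        by_cases hk : k = ynF hn
        · subst hk; rw [if_pos rfl]; omega
        · rw [if_neg hk]
          have := y_pair_le_Bn m hk
          omega
    · -- m (yn) = 0, B = 1
      have hyB := y_le_Bn m (ynF hn)
      have hBne : B = 1 ∧ m (yIdx (ynF hn)) = 0 := by
        rcases hred with ⟨i, j, hij, hi, hj⟩ | ⟨h0, hz⟩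
        · have := y_pair_le_Bn m hij
          omega
        · -- B could be 0? then m(yn) ≤ 0 = B, contradiction with hy1
          constructor <;> omega
      left
      right
      refine ⟨hdeg, yIdx (ynF hn), ?_, ?_⟩
      · rw [nfy, if_pos rfl]
        omega
      · intro j hj
        have hjv : (yIdx (ynF hn) : Fin (n+2)).val < j.val := hj
        have : (yIdx (ynF hn) : Fin (n+2)).val = n := by
          rw [yIdx_val]; simp [ynF]; omega
        have hjlt := j.isLt
        have : j = zI n := by
          apply Fin.ext
          rw [zI_val]
          omega
        subst this
        rw [nfz]
        omega
  · -- B ≥ 2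
    left
    right
    refine ⟨hdeg, zI n, ?_, ?_⟩
    · rw [nfz]
      omega
    · intro j hj
      exfalso
      have hjv : (zI n).val < j.val := hj
      have := j.isLt
      rw [zI_val] at hjv
      omega

noncomputable def NF {n : ℕ} (K : Type*) [Field K] (nf : (Fin (n+2) →₀ ℕ) → (Fin (n+2) →₀ ℕ)) :
    MvPolynomial (Fin (n+2)) K →ₗ[K] MvPolynomial (Fin (n+2)) K :=
  (Finsupp.lsum K fun u => (monomial (nf u) : K →ₗ[K] MvPolynomial (Fin (n+2)) K)) ∘ₗ
    (AddMonoidAlgebra.coeffLinearEquiv K).toLinearMap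

lemma NF_monomial {n : ℕ} (K : Type*) [Field K] (nf : (Fin (n+2) →₀ ℕ) → (Fin (n+2) →₀ ℕ))
    (u : Fin (n+2) →₀ ℕ) (c : K) : NF K nf (monomial u c) = monomial (nf u) c := by
  rw [NF]
  exact Finsupp.lsum_single (S := K) (f := fun u => (monomial (nf u) : K →ₗ[K] MvPolynomial (Fin (n+2)) K)) (i := u) (m := c)

lemma NF_apply {n : ℕ} (K : Type*) [Field K] (nf : (Fin (n+2) →₀ ℕ) → (Fin (n+2) →₀ ℕ))
    (f : MvPolynomial (Fin (n+2)) K) :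
    NF K nf f = ∑ u ∈ f.support, monomial (nf u) (coeff u f) := by
  rw [NF]
  exact Finsupp.lsum_apply (S := K) (fun u => (monomial (nf u) : K →ₗ[K] MvPolynomial (Fin (n+2)) K)) (AddMonoidAlgebra.coeffLinearEquiv K f)

lemma NF_mul_gen (hn : 3 ≤ n) {K : Type*} [Field K] (p : MvPolynomial (Fin (n+2)) K)
    {i j : Fin n} (hij : i ≠ j) :
    NF K (nfExp hn) (p * (X (yIdx i) * X (yIdx j) - X 0 * X (zI n))) = 0 := by
  induction p using MvPolynomial.induction_on' with
  | add p q hp hq => rw [add_mul, map_add, hp, hq, add_zero]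
  | monomial u c =>
    have hX : ∀ a : Fin (n+2), (X a : MvPolynomial (Fin (n+2)) K)
        = monomial (Finsupp.single a 1) 1 := fun a => rfl
    rw [mul_sub, hX, hX, hX, hX, monomial_mul, monomial_mul, monomial_mul, monomial_mul,
      mul_one, mul_one, map_sub, NF_monomial, NF_monomial]
    have he : nfExp hn (u + (Finsupp.single (yIdx i : Fin (n+2)) 1
        + Finsupp.single (yIdx j : Fin (n+2)) 1))
        = nfExp hn (u + (Finsupp.single (0 : Fin (n+2)) 1 + Finsupp.single (zI n) 1)) := by
      rw [← add_assoc, ← add_assoc]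
      exact nf_gen hn u hij
    rw [he, sub_self]

lemma NF_ideal_zero (hn : 3 ≤ n) {K : Type*} [Field K] {f : MvPolynomial (Fin (n+2)) K}
    (hf : f ∈ diamondIdeal K n) : NF K (nfExp hn) f = 0 := by
  rw [diamondIdeal] at hf
  obtain ⟨c, hcs, rfl⟩ := Submodule.mem_span_set.mp hf
  rw [map_finsuppSum]
  apply Finset.sum_eq_zero
  intro g hg
  obtain ⟨i, j, hij, rfl⟩ := hcs hg
  dsimp only
  rw [smul_eq_mul]
  exact NF_mul_gen hn _ (ne_of_lt hij)

lemma coeff_NF_self (hn : 3 ≤ n) {K : Type*} [Field K] {f : MvPolynomial (Fin (n+2)) K}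
    {m : Fin (n+2) →₀ ℕ} (hm : IsLeadMon f m) (hb : ¬ Bad hn m) :
    coeff m (NF K (nfExp hn) f) = coeff m f := by
  rw [NF_apply, MvPolynomial.coeff_sum, Finset.sum_eq_single m]
  · rw [nf_std hn hb, coeff_monomial, if_pos rfl]
  · intro u hu hum
    rw [coeff_monomial, if_neg]
    intro he
    have h1 := hm.2 u hu hum
    rcases nf_le hn u with h2 | h2
    · rw [he] at h2
      exact revlex_asymm h1 h2
    · rw [he] at h2
      exact hum h2.symm
  · intro hns
    exact absurd hm.1 hns

lemma lead_bad (hn : 3 ≤ n) {K : Type*} [Field K] {f : MvPolynomial (Fin (n+2)) K}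
    (hf : f ∈ diamondIdeal K n) {m : Fin (n+2) →₀ ℕ} (hm : IsLeadMon f m) : Bad hn m := by
  by_contra hb
  have h0 := NF_ideal_zero hn hf
  have h1 := coeff_NF_self hn hm hb
  rw [h0, coeff_zero] at h1
  exact (MvPolynomial.mem_support_iff.mp hm.1) h1.symm

variable {K : Type*} [Field K]

lemma hXmon (a : Fin (n+2)) : (X a : MvPolynomial (Fin (n+2)) K)
    = monomial (Finsupp.single a 1) 1 := rfl

lemma mon2 (a b : Fin (n+2)) : (X a * X b : MvPolynomial (Fin (n+2)) K)
    = monomial (Finsupp.single a 1 + Finsupp.single b 1) 1 := by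
  rw [hXmon, hXmon, monomial_mul, mul_one]

lemma mon3 (a b c : Fin (n+2)) : (X a * X b * X c : MvPolynomial (Fin (n+2)) K)
    = monomial (Finsupp.single a 1 + Finsupp.single b 1 + Finsupp.single c 1) 1 := by
  rw [hXmon, hXmon, hXmon, monomial_mul, monomial_mul, mul_one, mul_one]

lemma mon_sq (a b c : Fin (n+2)) : (X a * X b ^ 2 * X c : MvPolynomial (Fin (n+2)) K)
    = monomial (Finsupp.single a 1 + Finsupp.single b 2 + Finsupp.single c 1) 1 := by
  rw [hXmon, X_pow_eq_monomial, hXmon, monomial_mul, monomial_mul, mul_one, mul_one]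

lemma mon22 (a c : Fin (n+2)) : ((X a)^2 * (X c)^2 : MvPolynomial (Fin (n+2)) K)
    = monomial (Finsupp.single a 2 + Finsupp.single c 2) 1 := by
  rw [X_pow_eq_monomial, X_pow_eq_monomial, monomial_mul, mul_one]

lemma isLead_pair {m m' : Fin (n+2) →₀ ℕ} (h : m' ≠ m) (hlt : revlexLt m' m) :
    IsLeadMon (monomial m (1:K) - monomial m' 1) m := by
  have hc : ∀ u, coeff u (monomial m (1:K) - monomial m' 1)
      = (if m = u then (1:K) else 0) - (if m' = u then 1 else 0) := by
    intro u
    rw [coeff_sub, coeff_monomial, coeff_monomial]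
  constructor
  · rw [MvPolynomial.mem_support_iff, hc, if_pos rfl, if_neg h]
    simp
  · intro u hu hum
    rw [MvPolynomial.mem_support_iff, hc] at hu
    have : u = m' := by
      by_contra h2
      rw [if_neg (fun he => hum he.symm), if_neg (fun he => h2 he.symm)] at hu
      simp at hu
    subst this
    exact hlt

lemma Gmem {i j : Fin n} (hij : i ≠ j) :
    yP K n i * yP K n j - xP K n * zP K n ∈ diamondIdeal K n := by
  rcases lt_or_gt_of_ne hij with h | h
  · exact Ideal.subset_span ⟨i, j, h, rfl⟩
  · have : yP K n i * yP K n j - xP K n * zP K n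
        = yP K n j * yP K n i - xP K n * zP K n := by ring
    rw [this]
    exact Ideal.subset_span ⟨j, i, h, rfl⟩

lemma exists_third (hn : 3 ≤ n) (i j : Fin n) : ∃ t : Fin n, t ≠ i ∧ t ≠ j := by
  have h0 : (0:ℕ) < n := by omega
  have h1 : (1:ℕ) < n := by omega
  have h2 : (2:ℕ) < n := by omega
  by_cases hi0 : i = ⟨0, h0⟩
  · by_cases hj1 : j = ⟨1, h1⟩
    · exact ⟨⟨2, h2⟩, by simp [hi0, Fin.ext_iff], by simp [hj1, Fin.ext_iff]⟩
    · exact ⟨⟨1, h1⟩, by simp [hi0, Fin.ext_iff], fun h => (hj1 h.symm).elim⟩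
  · by_cases hj0 : j = ⟨0, h0⟩
    · by_cases hi1 : i = ⟨1, h1⟩
      · exact ⟨⟨2, h2⟩, by simp [hi1, Fin.ext_iff], by simp [hj0, Fin.ext_iff]⟩
      · exact ⟨⟨1, h1⟩, fun h => (hi1 h.symm).elim, by simp [hj0, Fin.ext_iff]⟩
    · exact ⟨⟨0, h0⟩, fun h => (hi0 h.symm).elim, fun h => (hj0 h.symm).elim⟩

lemma xz_y_mem (hn : 3 ≤ n) {i j : Fin n} (hij : i ≠ j) :
    xP K n * yP K n i * zP K n - xP K n * yP K n j * zP K n ∈ diamondIdeal K n := by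
  obtain ⟨t, hti, htj⟩ := exists_third hn i j
  have key : xP K n * yP K n i * zP K n - xP K n * yP K n j * zP K n
      = yP K n j * (yP K n i * yP K n t - xP K n * zP K n)
        - yP K n i * (yP K n t * yP K n j - xP K n * zP K n) := by ring
  rw [key]
  exact sub_mem (Ideal.mul_mem_left _ _ (Gmem (fun h => hti h.symm)))
    (Ideal.mul_mem_left _ _ (Gmem htj))

lemma xyyz_mem (hn : 3 ≤ n) {k : Fin n} (hk : ∃ t : Fin n, t ≠ k) :
    xP K n * yP K n k ^ 2 * zP K n - xP K n ^ 2 * zP K n ^ 2 ∈ diamondIdeal K n := by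
  obtain ⟨t, htk⟩ := hk
  have key : xP K n * yP K n k ^ 2 * zP K n - xP K n ^ 2 * zP K n ^ 2
      = xP K n * zP K n * (yP K n t * yP K n k - xP K n * zP K n)
        - yP K n k * (xP K n * yP K n t * zP K n - xP K n * yP K n k * zP K n) := by ring
  rw [key]
  exact sub_mem (Ideal.mul_mem_left _ _ (Gmem htk))
    (Ideal.mul_mem_left _ _ (xz_y_mem hn htk))

lemma mon2' (i j : Fin n) : (yP K n i * yP K n j)
    = monomial (single (yIdx i : Fin (n+2)) 1 + single (yIdx j : Fin (n+2)) 1) (1:K) := mon2 _ _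
lemma monXZ : xP K n * zP K n = monomial (single (0 : Fin (n+2)) 1 + single (zI n) 1) (1:K) :=
  mon2 _ _
lemma mon3' (k : Fin n) : xP K n * yP K n k * zP K n
    = monomial (single (0 : Fin (n+2)) 1 + single (yIdx k : Fin (n+2)) 1 + single (zI n) 1)
      (1:K) := mon3 _ _ _
lemma monsq' (k : Fin n) : xP K n * yP K n k ^ 2 * zP K n
    = monomial (single (0 : Fin (n+2)) 1 + single (yIdx k : Fin (n+2)) 2 + single (zI n) 1)
      (1:K) := mon_sq _ _ _
lemma mon22' : xP K n ^ 2 * zP K n ^ 2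
    = monomial (single (0 : Fin (n+2)) 2 + single (zI n) 2) (1:K) := mon22 _ _

lemma app2 (a b t : Fin (n+2)) (p q : ℕ) : (single a p + single b q : Fin (n+2) →₀ ℕ) t
    = (if a = t then p else 0) + (if b = t then q else 0) := by
  simp [Finsupp.add_apply, Finsupp.single_apply]
lemma app3 (a b c t : Fin (n+2)) (p q r : ℕ) :
    (single a p + single b q + single c r : Fin (n+2) →₀ ℕ) t
    = ((if a = t then p else 0) + (if b = t then q else 0)) + (if c = t then r else 0) := by
  simp [Finsupp.add_apply, Finsupp.single_apply]

lemma no_gt_z (j : Fin (n+2)) (hj : zI n < j) : False := by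
  have h1 : (zI n).val < j.val := hj
  have := j.isLt
  rw [zI_val] at h1
  omega

lemma neA (i j : Fin n) : (single (0:Fin (n+2)) 1 + single (zI n) 1)
    ≠ (single (yIdx i : Fin (n+2)) 1 + single (yIdx j : Fin (n+2)) 1) := by
  intro h
  have h2 := DFunLike.congr_fun h (0 : Fin (n+2))
  have e1 : ¬(zI n = (0:Fin (n+2))) := fun he => zero_ne_z he.symm
  have e2 : ¬((yIdx i : Fin (n+2)) = 0) := yIdx_ne_zero i
  have e3 : ¬((yIdx j : Fin (n+2)) = 0) := yIdx_ne_zero j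
  rw [app2, app2, if_pos rfl, if_neg e1, if_neg e2, if_neg e3] at h2
  omega

lemma ltA (i j : Fin n) : revlexLt (single (0:Fin (n+2)) 1 + single (zI n) 1)
    (single (yIdx i : Fin (n+2)) 1 + single (yIdx j : Fin (n+2)) 1) := by
  right
  refine ⟨by simp [mdeg_add, mdeg_single], zI n, ?_,
    fun j' hj' => absurd hj' (fun h => no_gt_z j' h)⟩
  have e1 : ¬((0:Fin (n+2)) = zI n) := zero_ne_z
  have e2 : ¬((yIdx i : Fin (n+2)) = zI n) := yIdx_ne_z i
  have e3 : ¬((yIdx j : Fin (n+2)) = zI n) := yIdx_ne_z j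
  rw [app2, app2, if_neg e1, if_pos rfl, if_neg e2, if_neg e3]
  omega

lemma neB (hn : 3 ≤ n) {k : Fin n} (hk : k ≠ ynF hn) :
    (single (0:Fin (n+2)) 1 + single (yIdx (ynF hn) : Fin (n+2)) 1 + single (zI n) 1)
    ≠ (single (0:Fin (n+2)) 1 + single (yIdx k : Fin (n+2)) 1 + single (zI n) 1) := by
  intro h
  have h2 := DFunLike.congr_fun h (yIdx (ynF hn) : Fin (n+2))
  have e1 : ¬((0:Fin (n+2)) = yIdx (ynF hn)) := fun he => yIdx_ne_zero _ he.symm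
  have e2 : ¬(zI n = (yIdx (ynF hn) : Fin (n+2))) := fun he => yIdx_ne_z _ he.symm
  have e3 : ¬((yIdx k : Fin (n+2)) = yIdx (ynF hn)) := fun he => hk (yIdx_inj he)
  rw [app3, app3, if_pos rfl, if_neg e1, if_neg e2, if_neg e3] at h2
  omega

lemma ltB (hn : 3 ≤ n) {k : Fin n} (hk : k ≠ ynF hn) :
    revlexLt (single (0:Fin (n+2)) 1 + single (yIdx (ynF hn) : Fin (n+2)) 1 + single (zI n) 1)
      (single (0:Fin (n+2)) 1 + single (yIdx k : Fin (n+2)) 1 + single (zI n) 1) := by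
  have e1 : ¬((0:Fin (n+2)) = yIdx (ynF hn)) := fun he => yIdx_ne_zero _ he.symm
  have e2 : ¬(zI n = (yIdx (ynF hn) : Fin (n+2))) := fun he => yIdx_ne_z _ he.symm
  have e3 : ¬((yIdx k : Fin (n+2)) = yIdx (ynF hn)) := fun he => hk (yIdx_inj he)
  right
  refine ⟨by simp [mdeg_add, mdeg_single], yIdx (ynF hn), ?_, ?_⟩
  · rw [app3, app3, if_pos rfl, if_neg e1, if_neg e2, if_neg e3]
    omega
  · intro j hj
    have h1 : (yIdx (ynF hn) : Fin (n+2)).val < j.val := hj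
    have h2 : (yIdx (ynF hn) : Fin (n+2)).val = n := by
      rw [yIdx_val]
      simp only [ynF]
      omega
    have h3 := j.isLt
    have : j = zI n := by
      apply Fin.ext
      rw [zI_val]
      omega
    subst this
    have e4 : ¬((0:Fin (n+2)) = zI n) := zero_ne_z
    have e5 : ¬((yIdx (ynF hn) : Fin (n+2)) = zI n) := yIdx_ne_z _
    have e6 : ¬((yIdx k : Fin (n+2)) = zI n) := yIdx_ne_z _
    rw [app3, app3, if_neg e4, if_neg e5, if_neg e6, if_pos rfl]

lemma neC (hn : 3 ≤ n) : (single (0:Fin (n+2)) 2 + single (zI n) 2)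
    ≠ (single (0:Fin (n+2)) 1 + single (yIdx (ynF hn) : Fin (n+2)) 2 + single (zI n) 1) := by
  intro h
  have h2 := DFunLike.congr_fun h (zI n)
  have e1 : ¬((0:Fin (n+2)) = zI n) := zero_ne_z
  have e2 : ¬((yIdx (ynF hn) : Fin (n+2)) = zI n) := yIdx_ne_z _
  simp only [app2, app3, if_neg e1, if_neg e2, if_true, reduceIte] at h2
  omega

lemma ltC (hn : 3 ≤ n) : revlexLt (single (0:Fin (n+2)) 2 + single (zI n) 2)
    (single (0:Fin (n+2)) 1 + single (yIdx (ynF hn) : Fin (n+2)) 2 + single (zI n) 1) := by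
  right
  refine ⟨by simp [mdeg_add, mdeg_single], zI n, ?_,
    fun j' hj' => absurd hj' (fun h => no_gt_z j' h)⟩
  have e1 : ¬((0:Fin (n+2)) = zI n) := zero_ne_z
  have e2 : ¬((yIdx (ynF hn) : Fin (n+2)) = zI n) := yIdx_ne_z _
  simp only [app2, app3, if_neg e1, if_neg e2, if_true, reduceIte]
  omega

end Aux

theorem initial_ideal_of_diamond (K : Type*) [Field K] (n : ℕ) (hn : 3 ≤ n) :
    initialIdeal K (diamondIdeal K n) =
      Ideal.span
        ({f | ∃ i j : Fin n, i < j ∧ f = yP K n i * yP K n j} ∪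
          {f | ∃ k : Fin n, (k : ℕ) < n - 1 ∧ f = xP K n * yP K n k * zP K n} ∪
          {xP K n * (yP K n ⟨n - 1, by omega⟩) ^ 2 * zP K n}) := by
  apply le_antisymm
  · rw [initialIdeal]
    apply Ideal.span_le.mpr
    rintro p ⟨f, hf, m, hlead, rfl⟩
    rcases lead_bad hn hf hlead with ⟨i, j, hij, hle⟩ | ⟨k, hk, hle⟩ | hle
    · have hmon : (monomial m (1:K)) = monomial (m - (Finsupp.single (yIdx i : Fin (n+2)) 1
          + Finsupp.single (yIdx j : Fin (n+2)) 1)) 1 * (yP K n i * yP K n j) := by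
        rw [mon2', monomial_mul, one_mul, tsub_add_cancel_of_le hle]
      rw [hmon]
      exact Ideal.mul_mem_left _ _ (Ideal.subset_span (Or.inl (Or.inl ⟨i, j, hij, rfl⟩)))
    · have hmon : (monomial m (1:K)) = monomial (m - (Finsupp.single (0 : Fin (n+2)) 1
          + Finsupp.single (yIdx k : Fin (n+2)) 1 + Finsupp.single (zI n) 1)) 1
          * (xP K n * yP K n k * zP K n) := by
        rw [mon3', monomial_mul, one_mul, tsub_add_cancel_of_le hle]
      rw [hmon]
      exact Ideal.mul_mem_left _ _ (Ideal.subset_span (Or.inl (Or.inr ⟨k, hk, rfl⟩)))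
    · have hmon : (monomial m (1:K)) = monomial (m - (Finsupp.single (0 : Fin (n+2)) 1
          + Finsupp.single (yIdx (ynF hn) : Fin (n+2)) 2 + Finsupp.single (zI n) 1)) 1
          * (xP K n * yP K n (ynF hn) ^ 2 * zP K n) := by
        rw [monsq', monomial_mul, one_mul, tsub_add_cancel_of_le hle]
      rw [hmon]
      exact Ideal.mul_mem_left _ _ (Ideal.subset_span (Or.inr rfl))
  · apply Ideal.span_le.mpr
    rintro p hp
    simp only [Set.mem_union, Set.mem_setOf_eq, Set.mem_singleton_iff] at hp
    rw [initialIdeal]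
    rcases hp with (⟨i, j, hij, rfl⟩ | ⟨k, hk, rfl⟩) | rfl
    · apply Ideal.subset_span
      refine ⟨yP K n i * yP K n j - xP K n * zP K n, Gmem (ne_of_lt hij),
        Finsupp.single (yIdx i : Fin (n+2)) 1 + Finsupp.single (yIdx j : Fin (n+2)) 1,
        ?_, mon2' i j⟩
      rw [mon2' i j, monXZ]
      exact isLead_pair (neA i j) (ltA i j)
    · have hkn : k ≠ ynF hn := by
        intro he
        rw [he] at hk
        have hv : ((ynF hn : Fin n) : ℕ) = n - 1 := rfl
        omega
      apply Ideal.subset_span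
      refine ⟨xP K n * yP K n k * zP K n - xP K n * yP K n (ynF hn) * zP K n, xz_y_mem hn hkn,
        Finsupp.single (0 : Fin (n+2)) 1 + Finsupp.single (yIdx k : Fin (n+2)) 1
          + Finsupp.single (zI n) 1, ?_, mon3' k⟩
      rw [mon3' k, mon3' (ynF hn)]
      exact isLead_pair (neB hn hkn) (ltB hn hkn)
    · apply Ideal.subset_span
      have hne : (⟨0, by omega⟩ : Fin n) ≠ ynF hn := by
        intro he
        have h2 : (0:ℕ) = n - 1 := congrArg Fin.val he
        omega
      refine ⟨xP K n * yP K n (ynF hn) ^ 2 * zP K n - xP K n ^ 2 * zP K n ^ 2,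
        xyyz_mem hn ⟨⟨0, by omega⟩, hne⟩,
        Finsupp.single (0 : Fin (n+2)) 1 + Finsupp.single (yIdx (ynF hn) : Fin (n+2)) 2
          + Finsupp.single (zI n) 1, ?_, monsq' (ynF hn)⟩
      rw [monsq' (ynF hn), mon22']
      exact isLead_pair (neC hn) (ltC hn)
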